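/- arXiv:1806.02261 — 5 statements merged into one kernel-verified Lean document; each statement's English description precedes it below -/
import Mathlib

section
/- For all real x > 0, Γ((x+1)/2) / Γ(x/2) ≤ √x. -/
open Real

theorem gamma_ratio_le_sqrt (x : ℝ) (hx : 0 < x) :
    Real.Gamma ((x + 1) / 2) / Real.Gamma (x / 2) ≤ Real.sqrt x := by
  have h2 : (0:ℝ) < x / 2 := by linarith
  have hG : 0 < Real.Gamma (x / 2) := Real.Gamma_pos_of_pos h2
  have hG1 : 0 < Real.Gamma (x / 2 + 1) := Real.Gamma_pos_of_pos (by linarith)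
  have hGm : 0 < Real.Gamma ((x + 1) / 2) := Real.Gamma_pos_of_pos (by linarith)
  -- midpoint log-convexity
  have hc := Real.convexOn_log_Gamma.2 (Set.mem_Ioi.mpr h2)
    (Set.mem_Ioi.mpr (show (0:ℝ) < x / 2 + 1 by linarith))
    (by norm_num : (0:ℝ) ≤ 1/2) (by norm_num : (0:ℝ) ≤ 1/2) (by norm_num)
  have hmid : (1/2 : ℝ) • (x/2) + (1/2 : ℝ) • (x/2 + 1) = (x + 1) / 2 := by
    simp only [smul_eq_mul]; ring
  rw [hmid] at hc
  simp only [Function.comp, smul_eq_mul] at hc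
  -- hc : log Γ((x+1)/2) ≤ 1/2 log Γ(x/2) + 1/2 log Γ(x/2+1)
  have key : Real.Gamma ((x + 1) / 2) ^ 2 ≤ Real.Gamma (x/2) * Real.Gamma (x/2 + 1) := by
    have := mul_le_mul_of_nonneg_left hc (by norm_num : (0:ℝ) ≤ 2)
    have hlog : Real.log (Real.Gamma ((x+1)/2) ^ 2) ≤
        Real.log (Real.Gamma (x/2) * Real.Gamma (x/2 + 1)) := by
      rw [Real.log_pow, Real.log_mul hG.ne' hG1.ne']
      push_cast
      linarith
    exact (Real.log_le_log_iff (by positivity) (by positivity)).mp hlog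
  rw [Real.Gamma_add_one h2.ne'] at key
  have hsq : Real.Gamma ((x + 1) / 2) ^ 2 ≤ (x/2) * Real.Gamma (x/2) ^ 2 := by
    nlinarith [key]
  have hle : Real.Gamma ((x + 1) / 2) / Real.Gamma (x / 2) ≤ Real.sqrt (x/2) := by
    rw [div_le_iff₀ hG]
    have h1 : Real.Gamma ((x + 1) / 2) ≤ Real.sqrt ((x/2) * Real.Gamma (x/2)^2) := by
      rw [← Real.sqrt_sq hGm.le]
      exact Real.sqrt_le_sqrt hsq
    rwa [Real.sqrt_mul (by positivity), Real.sqrt_sq hG.le] at h1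
  exact hle.trans (Real.sqrt_le_sqrt (by linarith))
end

section
/- The map x ↦ Γ(x + p/2) / Γ(x) is monotonically increasing on (0, ∞) for every fixed real p > 0. -/
open Real Set

theorem gamma_ratio_monotone (p : ℝ) (hp : 0 < p) :
    MonotoneOn (fun x : ℝ => Real.Gamma (x + p / 2) / Real.Gamma x) (Set.Ioi 0) := by
  set c := p / 2 with hc
  have hcpos : 0 < c := by positivity
  intro x hx y hy hxy
  rcases eq_or_lt_of_le hxy with rfl | hxy
  · exact le_refl _
  simp only [mem_Ioi] at hx hy
  have hxc : (0:ℝ) < x + c := by linarith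
  have hyc : (0:ℝ) < y + c := by linarith
  have f := Real.convexOn_log_Gamma
  -- slope at base x: points x+c ≤ y+c
  have h1 := f.secant_mono (a := x) (x := x + c) (y := y + c)
    (mem_Ioi.2 hx) (mem_Ioi.2 hxc) (mem_Ioi.2 hyc) (by linarith) (by linarith) (by linarith)
  have h2 := f.secant_mono (a := y + c) (x := x) (y := y)
    (mem_Ioi.2 hyc) (mem_Ioi.2 hx) (mem_Ioi.2 hy) (by linarith) (by linarith) hxy.le
  simp only [Function.comp_apply] at h1 h2
  have key : (Real.log (Real.Gamma (x + c)) - Real.log (Real.Gamma x)) / c ≤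
      (Real.log (Real.Gamma (y + c)) - Real.log (Real.Gamma y)) / c := by
    have e1 : ((x:ℝ) + c) - x = c := by ring
    have e2 : ((y:ℝ) + c) - y = c := by ring
    rw [e1] at h1
    have h2' : (Real.log (Real.Gamma (y + c)) - Real.log (Real.Gamma x)) / ((y + c) - x) ≤
        (Real.log (Real.Gamma (y + c)) - Real.log (Real.Gamma y)) / ((y + c) - y) := by
      rw [show x - (y + c) = -(y + c - x) by ring, show y - (y + c) = -(y + c - y) by ring,
        div_neg, div_neg, neg_le_neg_iff, div_le_div_iff₀ (by linarith) (by linarith)] at h2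
      rw [div_le_div_iff₀ (by linarith) (by linarith)]
      nlinarith [h2]
    rw [e2] at h2'
    exact h1.trans h2'
  have key2 : Real.log (Real.Gamma (x + c)) - Real.log (Real.Gamma x) ≤
      Real.log (Real.Gamma (y + c)) - Real.log (Real.Gamma y) :=
    (div_le_div_iff_of_pos_right hcpos).mp key
  have gx := Real.Gamma_pos_of_pos hx
  have gy := Real.Gamma_pos_of_pos hy
  have gxc := Real.Gamma_pos_of_pos hxc
  have gyc := Real.Gamma_pos_of_pos hyc
  have : Real.log (Real.Gamma (x + c) / Real.Gamma x) ≤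
      Real.log (Real.Gamma (y + c) / Real.Gamma y) := by
    rw [Real.log_div gxc.ne' gx.ne', Real.log_div gyc.ne' gy.ne']; exact key2
  have := Real.exp_le_exp.2 this
  rwa [Real.exp_log (by positivity), Real.exp_log (by positivity)] at this
end

section
/- Let f_ν be the density of the p-dimensional multivariate Student's t distribution with ν > 0 degrees of freedom, location μ ∈ ℝ^p and positive definite scale matrix V. Then for every β > 0, ∫_{ℝ^p} f_ν(z)^{1+β} dz = [Γ((ν+p)/2)^{β+1} Γ((βν + βp + ν)/2)] / [Γ(ν/2)^{β+1} Γ((βν + βp + ν + p)/2)] · (νπ)^{-βp/2} |V|^{-β/2}. -/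
open Real MeasureTheory Matrix

section Auxiliary

open Set

private lemma mvtAux_gammaInt {s a : ℝ} (hs : 0 < s) (ha : 0 < a) :
    ∫ t in Ioi (0:ℝ), t ^ (s-1) * exp (-(a * t)) = a ^ (-s) * Real.Gamma s := by
  have h := integral_rpow_mul_exp_neg_mul_rpow (p := 1) (q := s - 1) (b := a)
    one_pos (by linarith) ha
  simpa [Real.rpow_one, neg_mul] using h

private lemma mvtAux_gammaIntegrable {s a : ℝ} (hs : 0 < s) (ha : 0 < a) :
    IntegrableOn (fun t : ℝ => t ^ (s-1) * exp (-(a * t))) (Ioi 0) := by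
  have h := integrableOn_rpow_mul_exp_neg_mul_rpow (p := 1) (s := s - 1) (b := a)
    (by linarith) one_pos ha
  simpa [Real.rpow_one, neg_mul] using h

private lemma mvtAux_gaussPi (p : ℕ) {t : ℝ} (ht : 0 < t) :
    ∫ x : Fin p → ℝ, exp (-(t * ∑ i, x i ^ 2)) = (π / t) ^ ((p:ℝ)/2) := by
  have h1 : ∀ x : Fin p → ℝ, exp (-(t * ∑ i, x i ^ 2)) = ∏ i, exp (-t * (x i) ^ 2) := by
    intro x
    rw [← Real.exp_sum]
    congr 1
    rw [Finset.mul_sum]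
    simp [neg_mul, Finset.sum_neg_distrib]
  simp_rw [h1]
  rw [volume_pi, MeasureTheory.integral_fintype_prod_eq_pow (ι := Fin p) (fun u : ℝ => exp (-t * u ^ 2)),
    integral_gaussian]
  rw [Fintype.card_fin, Real.sqrt_eq_rpow, ← Real.rpow_natCast ((π/t) ^ ((1:ℝ)/2)) p,
    ← Real.rpow_mul (by positivity)]
  congr 1; ring

private lemma mvtAux_gaussPiIntegrable (p : ℕ) {t : ℝ} (ht : 0 < t) :
    Integrable (fun x : Fin p → ℝ => exp (-(t * ∑ i, x i ^ 2))) := by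
  have : Integrable (fun x : Fin p → ℝ => ∏ i, exp (-t * (x i) ^ 2)) :=
    Integrable.fintype_prod (f := fun _ u => exp (-t * u ^ 2))
      (fun _ => integrable_exp_neg_mul_sq ht)
  refine this.congr (Filter.Eventually.of_forall fun x => ?_)
  simp only [← Real.exp_sum]
  congr 1
  rw [Finset.mul_sum]
  simp [neg_mul]

/-- The key integral: `∫ (1 + ‖x‖²)^(-s)` over `ℝ^p`. -/
private lemma mvtAux_corePower (p : ℕ) {s : ℝ} (hs : (p:ℝ) < 2*s) :
    ∫ x : Fin p → ℝ, (1 + ∑ i, x i ^ 2) ^ (-s) =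
      π ^ ((p:ℝ)/2) * Real.Gamma (s - p/2) / Real.Gamma s := by
  have hp0 : (0:ℝ) ≤ p := Nat.cast_nonneg p
  have hs0 : 0 < s := by linarith
  have hs2 : 0 < s - p/2 := by linarith
  set Q : (Fin p → ℝ) → ℝ := fun x => ∑ i, x i ^ 2 with hQdef
  have hQ : ∀ x, 0 ≤ Q x := fun x => Finset.sum_nonneg fun i _ => sq_nonneg _
  have hQm : Measurable Q := by fun_prop
  have hbase : ∀ x, (0:ℝ) < 1 + Q x := fun x => by have := hQ x; linarith
  have hGm : Measurable fun x : Fin p → ℝ => (1 + Q x) ^ (-s) := by fun_prop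
  have hFm : Measurable fun q : (Fin p → ℝ) × ℝ =>
      ENNReal.ofReal (q.2 ^ (s-1) * exp (-((1 + Q q.1) * q.2))) := by fun_prop
  have hGamma : (0:ℝ) < Real.Gamma s := Real.Gamma_pos_of_pos hs0
  have stepA : ENNReal.ofReal (Real.Gamma s) * ∫⁻ x : Fin p → ℝ, ENNReal.ofReal ((1 + Q x) ^ (-s))
      = ∫⁻ x : Fin p → ℝ, ∫⁻ t in Ioi (0:ℝ),
          ENNReal.ofReal (t ^ (s-1) * exp (-((1 + Q x) * t))) := by
    rw [← lintegral_const_mul _ hGm.ennreal_ofReal]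
    congr 1; funext x
    rw [← ENNReal.ofReal_mul hGamma.le,
      ← ofReal_integral_eq_lintegral_ofReal (mvtAux_gammaIntegrable hs0 (hbase x))
        (ae_restrict_of_forall_mem measurableSet_Ioi fun t ht => by
          have : (0:ℝ) < t := ht; positivity),
      mvtAux_gammaInt hs0 (hbase x)]
    ring_nf
  have stepB : (∫⁻ x : Fin p → ℝ, ∫⁻ t in Ioi (0:ℝ),
        ENNReal.ofReal (t ^ (s-1) * exp (-((1 + Q x) * t))))
      = ∫⁻ t in Ioi (0:ℝ), ∫⁻ x : Fin p → ℝ,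
          ENNReal.ofReal (t ^ (s-1) * exp (-((1 + Q x) * t))) :=
    lintegral_lintegral_swap hFm.aemeasurable
  have stepC : ∀ t ∈ Ioi (0:ℝ), (∫⁻ x : Fin p → ℝ,
        ENNReal.ofReal (t ^ (s-1) * exp (-((1 + Q x) * t))))
      = ENNReal.ofReal (t ^ (s-1) * exp (-t) * (π / t) ^ ((p:ℝ)/2)) := by
    intro t ht
    rw [mem_Ioi] at ht
    have h1 : ∀ x : Fin p → ℝ, t ^ (s-1) * exp (-((1 + Q x) * t))
        = (t ^ (s-1) * exp (-t)) * exp (-(t * Q x)) := by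
      intro x
      rw [mul_assoc, ← Real.exp_add]
      congr 2
      ring
    have hc : (0:ℝ) ≤ t ^ (s-1) * exp (-t) := by positivity
    simp_rw [h1, ENNReal.ofReal_mul hc]
    rw [lintegral_const_mul' _ _ ENNReal.ofReal_ne_top,
      ← ofReal_integral_eq_lintegral_ofReal (mvtAux_gaussPiIntegrable p ht)
        (Filter.Eventually.of_forall fun x => (exp_pos _).le),
      mvtAux_gaussPi p ht, ← ENNReal.ofReal_mul hc]
  have stepD : (∫⁻ t in Ioi (0:ℝ),
        ENNReal.ofReal (t ^ (s-1) * exp (-t) * (π / t) ^ ((p:ℝ)/2)))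
      = ENNReal.ofReal (π ^ ((p:ℝ)/2) * Real.Gamma (s - p/2)) := by
    have h1 : ∀ t ∈ Ioi (0:ℝ), ENNReal.ofReal (t ^ (s-1) * exp (-t) * (π / t) ^ ((p:ℝ)/2))
        = ENNReal.ofReal (π ^ ((p:ℝ)/2) * (t ^ (s - (p:ℝ)/2 - 1) * exp (-(1 * t)))) := by
      intro t ht
      rw [mem_Ioi] at ht
      congr 1
      have e1 : t ^ (s - (p:ℝ)/2 - 1) = t ^ (s-1) * (t ^ ((p:ℝ)/2))⁻¹ := by
        rw [← Real.rpow_neg ht.le, ← Real.rpow_add ht]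
        congr 1; ring
      rw [Real.div_rpow pi_pos.le ht.le, e1, one_mul]
      ring
    rw [setLIntegral_congr_fun measurableSet_Ioi h1]
    simp_rw [ENNReal.ofReal_mul (by positivity : (0:ℝ) ≤ π ^ ((p:ℝ)/2))]
    rw [lintegral_const_mul' _ _ ENNReal.ofReal_ne_top,
      ← ofReal_integral_eq_lintegral_ofReal
        (by simpa [IntegrableOn] using mvtAux_gammaIntegrable hs2 one_pos)
        (ae_restrict_of_forall_mem measurableSet_Ioi fun t ht => by
          have : (0:ℝ) < t := ht; positivity)]
    have h2 := mvtAux_gammaInt hs2 one_pos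
    simp only [one_mul] at h2 ⊢
    rw [h2, Real.one_rpow, one_mul, ← ENNReal.ofReal_mul (by positivity)]
  have key : ENNReal.ofReal (Real.Gamma s) * ∫⁻ x : Fin p → ℝ, ENNReal.ofReal ((1 + Q x) ^ (-s))
      = ENNReal.ofReal (π ^ ((p:ℝ)/2) * Real.Gamma (s - p/2)) := by
    rw [stepA, stepB, setLIntegral_congr_fun measurableSet_Ioi
      stepC, stepD]
  have hL : (∫⁻ x : Fin p → ℝ, ENNReal.ofReal ((1 + Q x) ^ (-s)))
      = ENNReal.ofReal (π ^ ((p:ℝ)/2) * Real.Gamma (s - p/2)) / ENNReal.ofReal (Real.Gamma s) := by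
    rw [ENNReal.eq_div_iff (by simpa using hGamma) ENNReal.ofReal_ne_top]
    exact key
  rw [integral_eq_lintegral_of_nonneg_ae
    (Filter.Eventually.of_forall fun x => Real.rpow_nonneg (hbase x).le _)
    hGm.aestronglyMeasurable, hL, ENNReal.toReal_div, ENNReal.toReal_ofReal (by positivity),
    ENNReal.toReal_ofReal hGamma.le, mul_div_assoc]

/-- Linear change of variables for integrals over `ℝ^p`. -/
private lemma mvtAux_cov (p : ℕ) (M : Matrix (Fin p) (Fin p) ℝ) (hM : M.det ≠ 0)
    (μ : Fin p → ℝ) {g : (Fin p → ℝ) → ℝ} (hg : Continuous g) :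
    ∫ z : Fin p → ℝ, g z = |M.det| * ∫ x : Fin p → ℝ, g (M *ᵥ x + μ) := by
  have hT : Measure.map (Matrix.toLin' M) volume
      = ENNReal.ofReal |(M.det)⁻¹| • volume :=
    Real.map_matrix_volume_pi_eq_smul_volume_pi hM
  have hTc : Continuous (Matrix.toLin' M) := LinearMap.continuous_on_pi _
  have h1 : ∫ x : Fin p → ℝ, g (M *ᵥ x + μ)
      = ∫ z : Fin p → ℝ, g (z + μ) ∂(Measure.map (Matrix.toLin' M) volume) := by
    rw [integral_map hTc.measurable.aemeasurable]
    · simp [Matrix.toLin'_apply]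
    · rw [hT]
      exact ((hg.comp (continuous_id.add continuous_const)).aestronglyMeasurable).smul_measure _
  have h2 : ∫ z : Fin p → ℝ, g (z + μ) ∂(Measure.map (Matrix.toLin' M) volume)
      = |(M.det)⁻¹| * ∫ z : Fin p → ℝ, g (z + μ) := by
    rw [hT, integral_smul_measure, ENNReal.toReal_ofReal (abs_nonneg _), smul_eq_mul]
  have h3 : ∫ z : Fin p → ℝ, g (z + μ) = ∫ z : Fin p → ℝ, g z :=
    integral_add_right_eq_self g μ
  rw [h1, h2, h3, ← mul_assoc, abs_inv, mul_inv_cancel₀ (by simpa using hM), one_mul]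

/-- The scalar bookkeeping identity. -/
private lemma mvtAux_scalar (ν β d G1 G2 G3 G4 : ℝ) (hν : 0 < ν) (hd : 0 < d)
    (hG1 : 0 < G1) (hG2 : 0 < G2) (hG4 : 0 < G4) (p : ℕ) :
    (G1 / (G2 * ν^((p:ℝ)/2) * π^((p:ℝ)/2) * d^((1:ℝ)/2)))^(1+β) *
      (ν^((p:ℝ)/2) * d^((1:ℝ)/2) * (π^((p:ℝ)/2) * G3 / G4)) =
    G1^(β+1) * G3 / (G2^(β+1) * G4) * (ν*π)^(-(β*(p:ℝ))/2) * d^(-β/2) := by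
  have h1 : (0:ℝ) < ν^((p:ℝ)/2) := rpow_pos_of_pos hν _
  have h2 : (0:ℝ) < π^((p:ℝ)/2) := rpow_pos_of_pos pi_pos _
  have h3 : (0:ℝ) < d^((1:ℝ)/2) := rpow_pos_of_pos hd _
  rw [div_rpow hG1.le (by positivity), mul_rpow (by positivity) h3.le,
    mul_rpow (by positivity) h2.le, mul_rpow hG2.le h1.le,
    ← Real.rpow_mul hν.le, ← Real.rpow_mul pi_pos.le, ← Real.rpow_mul hd.le,
    Real.mul_rpow hν.le pi_pos.le, add_comm (1:ℝ) β]
  rw [show ν ^ (-(β*(p:ℝ))/2) = (ν ^ ((p:ℝ)/2 * (β+1)))⁻¹ * ν ^ ((p:ℝ)/2) from ?_,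
      show π ^ (-(β*(p:ℝ))/2) = (π ^ ((p:ℝ)/2 * (β+1)))⁻¹ * π ^ ((p:ℝ)/2) from ?_,
      show d ^ (-β/2) = (d ^ ((1:ℝ)/2 * (β+1)))⁻¹ * d ^ ((1:ℝ)/2) from ?_]
  · field_simp
  · rw [← Real.rpow_neg hd.le, ← Real.rpow_add hd]; congr 1; ring
  · rw [← Real.rpow_neg pi_pos.le, ← Real.rpow_add pi_pos]; congr 1; ring
  · rw [← Real.rpow_neg hν.le, ← Real.rpow_add hν]; congr 1; ring

end Auxiliary

/-- Density of the `p`-dimensional multivariate Student's t distribution with `ν` degrees of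
freedom, location `μ` and scale matrix `V`. -/
noncomputable def mvtDensity (p : ℕ) (ν : ℝ) (μ : Fin p → ℝ)
    (V : Matrix (Fin p) (Fin p) ℝ) (z : Fin p → ℝ) : ℝ :=
  Real.Gamma ((ν + p) / 2) /
      (Real.Gamma (ν / 2) * ν ^ ((p : ℝ) / 2) * π ^ ((p : ℝ) / 2) * V.det ^ ((1 : ℝ) / 2)) *
    (1 + (1 / ν) * ((z - μ) ⬝ᵥ (V⁻¹ *ᵥ (z - μ)))) ^ (-(ν + p) / 2)

theorem mvt_power_integral (p : ℕ) (ν β : ℝ) (hν : 0 < ν) (hβ : 0 < β)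
    (μ : Fin p → ℝ) (V : Matrix (Fin p) (Fin p) ℝ) (hV : V.PosDef) :
    ∫ z : Fin p → ℝ, mvtDensity p ν μ V z ^ (1 + β) =
      (Real.Gamma ((ν + p) / 2) ^ (β + 1) * Real.Gamma ((β * ν + β * p + ν) / 2)) /
        (Real.Gamma (ν / 2) ^ (β + 1) * Real.Gamma ((β * ν + β * p + ν + p) / 2)) *
        (ν * π) ^ (-(β * p) / 2) * V.det ^ (-β / 2) := by
  have hp0 : (0:ℝ) ≤ p := Nat.cast_nonneg p
  have hd : 0 < V.det := hV.det_pos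
  -- matrix facts about the square root of V
  open scoped MatrixOrder in set A := CFC.sqrt V with hAdef
  open scoped MatrixOrder in have hAps : A.PosSemidef := (CFC.sqrt_nonneg V).posSemidef
  open scoped MatrixOrder in have hAA : A * A = V := CFC.sqrt_mul_sqrt_self V hV.posSemidef.nonneg
  have hAt : Aᵀ = A := by
    have h := hAps.isHermitian
    rwa [Matrix.IsHermitian, conjTranspose_eq_transpose_of_trivial] at h
  have hdetA2 : A.det ^ 2 = V.det := by rw [sq, ← Matrix.det_mul, hAA]
  have hdetA0 : A.det ≠ 0 := fun h => by simp [h] at hdetA2; exact hd.ne' hdetA2.symm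
  have hdetA : IsUnit A.det := hdetA0.isUnit
  have hquad : ∀ x : Fin p → ℝ, (A *ᵥ x) ⬝ᵥ (V⁻¹ *ᵥ (A *ᵥ x)) = x ⬝ᵥ x := by
    intro x
    have hVinv : V⁻¹ = A⁻¹ * A⁻¹ := by rw [← hAA, Matrix.mul_inv_rev]
    rw [hVinv, Matrix.mulVec_mulVec, mul_assoc, Matrix.nonsing_inv_mul A hdetA, mul_one,
      dotProduct_comm, Matrix.dotProduct_mulVec, ← Matrix.mulVec_transpose, hAt,
      Matrix.mulVec_mulVec, Matrix.mul_nonsing_inv A hdetA, Matrix.one_mulVec]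
  have hq0 : ∀ y : Fin p → ℝ, 0 ≤ y ⬝ᵥ (V⁻¹ *ᵥ y) := fun y => by
    have h := (hV.posSemidef.inv).re_dotProduct_nonneg y
    simpa using h
  -- the matrix for the change of variables
  set M : Matrix (Fin p) (Fin p) ℝ := Real.sqrt ν • A with hMdef
  have hdetM : M.det = (Real.sqrt ν) ^ p * A.det := by
    rw [hMdef, Matrix.det_smul, Fintype.card_fin]
  have hdetM0 : M.det ≠ 0 := by
    rw [hdetM]
    exact mul_ne_zero (by positivity) hdetA0
  have habsM : |M.det| = ν ^ ((p:ℝ)/2) * V.det ^ ((1:ℝ)/2) := by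
    rw [hdetM, abs_mul, abs_of_nonneg (by positivity : (0:ℝ) ≤ (Real.sqrt ν) ^ p)]
    congr 1
    · rw [Real.sqrt_eq_rpow, ← Real.rpow_natCast (ν ^ ((1:ℝ)/2)) p,
        ← Real.rpow_mul hν.le]
      congr 1; ring
    · rw [← Real.sqrt_sq_eq_abs, hdetA2, Real.sqrt_eq_rpow]
  -- the exponent
  set s' : ℝ := (ν + p) * (1 + β) / 2 with hs'def
  have hs'2 : (p:ℝ) < 2 * s' := by rw [hs'def]; nlinarith
  have hG1 : 0 < Real.Gamma ((ν + p)/2) := Real.Gamma_pos_of_pos (by positivity)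
  have hG2 : 0 < Real.Gamma (ν/2) := Real.Gamma_pos_of_pos (by positivity)
  have hG3 : 0 < Real.Gamma (s' - (p:ℝ)/2) :=
    Real.Gamma_pos_of_pos (by rw [hs'def]; nlinarith)
  have hG4 : 0 < Real.Gamma s' := Real.Gamma_pos_of_pos (by rw [hs'def]; positivity)
  set C : ℝ := Real.Gamma ((ν + p) / 2) /
      (Real.Gamma (ν / 2) * ν ^ ((p : ℝ) / 2) * π ^ ((p : ℝ) / 2) * V.det ^ ((1 : ℝ) / 2))
    with hCdef
  have hC : 0 < C := by rw [hCdef]; positivity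
  have hbase : ∀ z : Fin p → ℝ, (0:ℝ) < 1 + (1/ν) * ((z - μ) ⬝ᵥ (V⁻¹ *ᵥ (z - μ))) := by
    intro z
    have := mul_nonneg (by positivity : (0:ℝ) ≤ 1/ν) (hq0 (z - μ))
    linarith
  -- rewrite the integrand
  have step1 : ∀ z : Fin p → ℝ, mvtDensity p ν μ V z ^ (1 + β)
      = C ^ (1 + β) * (1 + (1/ν) * ((z - μ) ⬝ᵥ (V⁻¹ *ᵥ (z - μ)))) ^ (-s') := by
    intro z
    simp only [mvtDensity, ← hCdef]
    rw [mul_rpow hC.le (rpow_nonneg (hbase z).le _), ← Real.rpow_mul (hbase z).le]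
    congr 1
    rw [hs'def]; ring
  simp_rw [step1]
  rw [MeasureTheory.integral_const_mul]
  have hgc : Continuous fun z : Fin p → ℝ =>
      (1 + (1/ν) * ((z - μ) ⬝ᵥ (V⁻¹ *ᵥ (z - μ)))) ^ (-s') := by
    have hin : Continuous fun z : Fin p → ℝ =>
        1 + (1/ν) * ((z - μ) ⬝ᵥ (V⁻¹ *ᵥ (z - μ))) := by
      simp only [dotProduct, Matrix.mulVec, Pi.sub_apply]
      fun_prop
    exact hin.rpow_const fun z => Or.inl (hbase z).ne'
  rw [mvtAux_cov p M hdetM0 μ hgc]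
  have step2 : ∀ x : Fin p → ℝ,
      (1 + (1/ν) * (((M *ᵥ x + μ) - μ) ⬝ᵥ (V⁻¹ *ᵥ ((M *ᵥ x + μ) - μ)))) ^ (-s')
      = (1 + ∑ i, x i ^ 2) ^ (-s') := by
    intro x
    have e0 : (M *ᵥ x + μ) - μ = Real.sqrt ν • (A *ᵥ x) := by
      rw [add_sub_cancel_right, hMdef, Matrix.smul_mulVec]
    have e1 : (1/ν) * ((Real.sqrt ν • (A *ᵥ x)) ⬝ᵥ (V⁻¹ *ᵥ (Real.sqrt ν • (A *ᵥ x))))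
        = ∑ i, x i ^ 2 := by
      rw [Matrix.mulVec_smul, smul_dotProduct, dotProduct_smul, hquad,
        smul_eq_mul, smul_eq_mul, ← mul_assoc (Real.sqrt ν), Real.mul_self_sqrt hν.le]
      have e2 : x ⬝ᵥ x = ∑ i, x i ^ 2 := by simp [dotProduct, sq]
      rw [e2]
      field_simp
    rw [e0, e1]
  simp_rw [step2]
  rw [mvtAux_corePower p hs'2, habsM]
  rw [show s' - (p:ℝ)/2 = (β*ν+β*(p:ℝ)+ν)/2 by rw [hs'def]; ring,
      show s' = (β*ν+β*(p:ℝ)+ν+(p:ℝ))/2 by rw [hs'def]; ring, hCdef]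
  exact mvtAux_scalar ν β V.det _ _ _ _ hν hd hG1 hG2
    (Real.Gamma_pos_of_pos (by positivity)) p
end

section
/- Let f_ν be the density of the p-dimensional multivariate Student's t distribution with ν > 0 degrees of freedom and positive definite scale V. Then for every β ≥ 0, (1/(1+β)) ∫ f_ν(z)^{1+β} dz ≤ [Γ((ν+p)/2) / Γ(ν/2)]^β · (1/(1+β)) (πν)^{-βp/2} |V|^{-β/2}. -/
open Real MeasureTheory Matrix

section MvtAux

open Set

private lemma mvt_realBeta (a b : ℝ) (ha : 0 < a) (hb : 0 < b) :
    ∫ x in Ioo (0:ℝ) 1, x ^ (a-1) * (1-x) ^ (b-1) =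
      Real.Gamma a * Real.Gamma b / Real.Gamma (a+b) := by
  have hab : (0:ℝ) < a + b := by linarith
  have hG : Real.Gamma (a+b) ≠ 0 := (Real.Gamma_pos_of_pos hab).ne'
  have h := Complex.Gamma_mul_Gamma_eq_betaIntegral (s := (a:ℂ)) (t := (b:ℂ))
    (by simpa using ha) (by simpa using hb)
  have hBeta : Complex.betaIntegral (a:ℂ) (b:ℂ) =
      ((∫ x in Ioo (0:ℝ) 1, x ^ (a-1) * (1-x) ^ (b-1) : ℝ) : ℂ) := by
    rw [Complex.betaIntegral]
    rw [intervalIntegral.integral_of_le zero_le_one, integral_Ioc_eq_integral_Ioo]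
    rw [show (∫ (t : ℝ) in Ioo (0:ℝ) 1, (t:ℂ) ^ ((a:ℂ) - 1) * (1 - (t:ℂ)) ^ ((b:ℂ) - 1)) =
        ∫ (t : ℝ) in Ioo (0:ℝ) 1, ((( t ^ (a-1) * (1-t) ^ (b-1) : ℝ)) : ℂ) from
      setIntegral_congr_fun measurableSet_Ioo (fun x hx => ?_)]
    · exact integral_ofReal
    have hx0 : (0:ℝ) ≤ x := hx.1.le
    have hx1 : (0:ℝ) ≤ 1 - x := by linarith [hx.2]
    rw [show ((a:ℂ)-1) = ((a-1:ℝ):ℂ) by push_cast; ring,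
      show ((b:ℂ)-1) = ((b-1:ℝ):ℂ) by push_cast; ring,
      show (1 - (x:ℂ)) = ((1-x:ℝ):ℂ) by push_cast; ring,
      ← Complex.ofReal_cpow hx0, ← Complex.ofReal_cpow hx1, ← Complex.ofReal_mul]
  rw [hBeta, ← Complex.ofReal_add, Complex.Gamma_ofReal, Complex.Gamma_ofReal,
    Complex.Gamma_ofReal] at h
  have := h
  rw [← Complex.ofReal_mul, ← Complex.ofReal_mul] at this
  have h2 : Real.Gamma a * Real.Gamma b =
      Real.Gamma (a+b) * ∫ x in Ioo (0:ℝ) 1, x ^ (a-1) * (1-x) ^ (b-1) := by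
    exact_mod_cast this
  field_simp [h2]
  rw [h2]; ring

private lemma mvt_betaIoi (a b : ℝ) (ha : 0 < a) (hb : 0 < b) :
    ∫ t in Ioi (0:ℝ), t ^ (b-1) * (1+t) ^ (-(a+b)) =
      Real.Gamma a * Real.Gamma b / Real.Gamma (a+b) := by
  have hrealBeta := mvt_realBeta a b ha hb
  have himg : (fun u : ℝ => (1+u)⁻¹) '' Ioi 0 = Ioo (0:ℝ) 1 := by
    ext x
    constructor
    · rintro ⟨u, hu, rfl⟩
      have h1 : (1:ℝ) < 1 + u := by linarith [mem_Ioi.mp hu]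
      exact ⟨by positivity, by rw [inv_lt_one_iff₀]; right; exact h1⟩
    · intro hx
      refine ⟨x⁻¹ - 1, ?_, ?_⟩
      · have : (1:ℝ) < x⁻¹ := (one_lt_inv₀ hx.1).mpr hx.2
        simpa using by linarith
      · have hx0 : x ≠ 0 := ne_of_gt hx.1
        field_simp
        ring
  have hderiv : ∀ u ∈ Ioi (0:ℝ), HasDerivWithinAt (fun u : ℝ => (1+u)⁻¹)
      (-(((1+u)^2)⁻¹)) (Ioi 0) u := by
    intro u hu
    have h1 : (1 + u) ≠ 0 := by have := mem_Ioi.mp hu; positivity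
    have : HasDerivAt (fun u : ℝ => (1+u)⁻¹) (-1 / (1+u)^2) u := by
      exact ((hasDerivAt_id u).const_add 1).inv h1
    simpa [neg_div, one_div] using this.hasDerivWithinAt
  have hinj : InjOn (fun u : ℝ => (1+u)⁻¹) (Ioi 0) := by
    intro u hu v hv h
    have hu' := mem_Ioi.mp hu; have hv' := mem_Ioi.mp hv
    simp only at h
    have := inv_injective h
    linarith [this]
  have key := integral_image_eq_integral_abs_deriv_smul measurableSet_Ioi hderiv hinj
    (fun x => x ^ (a-1) * (1-x) ^ (b-1))
  rw [himg, hrealBeta] at key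
  rw [key]
  refine setIntegral_congr_fun measurableSet_Ioi (fun u hu => ?_)
  have hu' : (0:ℝ) < u := mem_Ioi.mp hu
  have hc : (0:ℝ) < 1 + u := by linarith
  have h2 : (1:ℝ) - (1+u)⁻¹ = u / (1+u) := by field_simp; ring
  have e1 : ((1+u)⁻¹) ^ (a-1) = (1+u) ^ (1-a) := by
    rw [← Real.rpow_neg_one (1+u), ← Real.rpow_mul hc.le]; congr 1; ring
  have e2 : ((1:ℝ) - (1+u)⁻¹) ^ (b-1) = u^(b-1) * (1+u)^(1-b) := by
    rw [h2, Real.div_rpow hu'.le hc.le, div_eq_mul_inv, ← Real.rpow_neg hc.le]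
    congr 2; ring
  have e3 : |(-(((1+u)^2)⁻¹))| = (1+u)^(-2 : ℝ) := by
    rw [abs_neg, abs_of_pos (by positivity),
      show ((1+u)^2) = (1+u)^((2:ℕ):ℝ) from (Real.rpow_natCast _ 2).symm,
      ← Real.rpow_neg hc.le]
    norm_num
  rw [smul_eq_mul, e1, e2, e3,
    show (1+u)^(-2:ℝ) * ((1+u)^(1-a) * (u^(b-1)*(1+u)^(1-b)))
      = u^(b-1) * ((1+u)^(-2:ℝ) * (1+u)^(1-a) * (1+u)^(1-b)) from by ring,
    ← Real.rpow_add hc, ← Real.rpow_add hc]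
  congr 1
  ring

private lemma mvt_betaIoi_sq (a b : ℝ) (ha : 0 < a) (hb : 0 < b) :
    ∫ r in Ioi (0:ℝ), r ^ (2*b-1) * (1+r^2) ^ (-(a+b)) =
      Real.Gamma a * Real.Gamma b / (2 * Real.Gamma (a+b)) := by
  have hIoi := mvt_betaIoi a b ha hb
  have h2 : (2:ℝ) ≠ 0 := two_ne_zero
  have key := integral_comp_rpow_Ioi (fun t : ℝ => t ^ (b-1) * (1+t) ^ (-(a+b))) h2
  rw [hIoi] at key
  have congrstep : ∫ x in Ioi (0:ℝ), (|(2:ℝ)| * x ^ ((2:ℝ) - 1)) •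
      ((x ^ (2:ℝ)) ^ (b-1) * (1 + x ^ (2:ℝ)) ^ (-(a+b)))
      = ∫ r in Ioi (0:ℝ), 2 * (r ^ (2*b-1) * (1+r^2) ^ (-(a+b))) := by
    refine setIntegral_congr_fun measurableSet_Ioi (fun x hx => ?_)
    have hx' : (0:ℝ) < x := mem_Ioi.mp hx
    have hsq : x ^ (2:ℝ) = x ^ 2 := by
      rw [show (2:ℝ) = ((2:ℕ):ℝ) by norm_num, Real.rpow_natCast]
    have e1 : (x ^ (2:ℝ)) ^ (b-1) = x ^ (2*b - 2) := by
      rw [← Real.rpow_mul hx'.le]; congr 1; ring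
    rw [smul_eq_mul, e1, hsq]
    rw [show |(2:ℝ)| * x ^ ((2:ℝ)-1) * (x ^ (2*b-2) * (1 + x^2) ^ (-(a+b)))
        = 2 * ((x ^ ((2:ℝ)-1) * x ^ (2*b-2)) * (1+x^2) ^ (-(a+b))) from by
      rw [abs_of_pos (by norm_num : (0:ℝ) < 2)]; ring,
      ← Real.rpow_add hx']
    congr 2
    ring
  rw [congrstep, MeasureTheory.integral_const_mul] at key
  have hhalf : Real.Gamma a * Real.Gamma b / (2 * Real.Gamma (a+b))
      = (Real.Gamma a * Real.Gamma b / Real.Gamma (a+b)) / 2 := by ring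
  rw [hhalf]
  linarith [key]

private lemma mvt_euclid (p : ℕ) (hp : 0 < p) (t : ℝ) (ht : (p:ℝ) < t) :
    ∫ x : EuclideanSpace ℝ (Fin p), (1 + ‖x‖^2) ^ (-t/2) =
      π^((p:ℝ)/2) * Real.Gamma ((t-p)/2) / Real.Gamma (t/2) := by
  have hpr : (0:ℝ) < p := Nat.cast_pos.mpr hp
  have hsq := mvt_betaIoi_sq ((t-p)/2) ((p:ℝ)/2) (by linarith) (by positivity)
  haveI : Nonempty (Fin p) := ⟨⟨0, hp⟩⟩
  have key := MeasureTheory.integral_fun_norm_addHaar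
    (volume : Measure (EuclideanSpace ℝ (Fin p))) (fun r => (1 + r^2) ^ (-t/2))
  rw [measureReal_def, EuclideanSpace.volume_ball] at key
  simp only [finrank_euclideanSpace_fin, Fintype.card_fin] at key
  rw [key]
  have hball : ((ENNReal.ofReal 1 ^ p *
      ENNReal.ofReal (√π ^ p / Real.Gamma ((p:ℝ)/2 + 1)))).toReal
      = π ^ ((p:ℝ)/2) / Real.Gamma ((p:ℝ)/2 + 1) := by
    rw [ENNReal.ofReal_one, one_pow, one_mul, ENNReal.toReal_ofReal (by positivity)]
    rw [show √π ^ p = π ^ ((p:ℝ)/2) by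
      rw [Real.sqrt_eq_rpow, ← Real.rpow_natCast (π ^ ((1:ℝ)/2)) p,
        ← Real.rpow_mul pi_pos.le]
      congr 1; ring]
  rw [hball]
  have hIint : ∫ y in Ioi (0:ℝ), y ^ (p - 1) • (1 + y^2) ^ (-t/2)
      = Real.Gamma ((t-p)/2) * Real.Gamma ((p:ℝ)/2) / (2 * Real.Gamma (t/2)) := by
    rw [show (t:ℝ)/2 = (t-p)/2 + (p:ℝ)/2 by ring, ← hsq]
    refine setIntegral_congr_fun measurableSet_Ioi (fun y hy => ?_)
    have hy' : (0:ℝ) < y := mem_Ioi.mp hy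
    have hyp : y ^ (p - 1) = y ^ (2*((p:ℝ)/2) - 1) := by
      rw [← Real.rpow_natCast y (p-1)]
      congr 1
      rw [Nat.cast_sub hp, Nat.cast_one]
      ring
    rw [smul_eq_mul, hyp, show (-t/2) = -((t-(p:ℝ))/2 + (p:ℝ)/2) by ring]
  rw [hIint, nsmul_eq_mul, smul_eq_mul]
  have hGp : Real.Gamma ((p:ℝ)/2 + 1) = ((p:ℝ)/2) * Real.Gamma ((p:ℝ)/2) :=
    Real.Gamma_add_one (by positivity)
  have hGppos : 0 < Real.Gamma ((p:ℝ)/2) := Real.Gamma_pos_of_pos (by positivity)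
  have hGtpos : 0 < Real.Gamma (t/2) := Real.Gamma_pos_of_pos (by linarith)
  have hGtp : 0 < Real.Gamma ((t-(p:ℝ))/2) := Real.Gamma_pos_of_pos (by linarith)
  rw [hGp]
  field_simp

private lemma mvt_dot_nonneg {p : ℕ} (z : Fin p → ℝ) : (0:ℝ) ≤ z ⬝ᵥ z :=
  Finset.sum_nonneg (fun _ _ => mul_self_nonneg _)

private lemma mvt_contF {p : ℕ} (t : ℝ) :
    Continuous (fun z : Fin p → ℝ => (1 + z ⬝ᵥ z) ^ (-t/2)) := by
  have h1 : Continuous (fun z : Fin p → ℝ => 1 + z ⬝ᵥ z) := by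
    unfold dotProduct
    fun_prop
  refine h1.rpow_const (fun z => Or.inl ?_)
  have := mvt_dot_nonneg z
  positivity

private lemma mvt_dot_eq_normsq {p : ℕ} (x : EuclideanSpace ℝ (Fin p)) :
    (MeasurableEquiv.toLp 2 (Fin p → ℝ)).symm x ⬝ᵥ (MeasurableEquiv.toLp 2 (Fin p → ℝ)).symm x
      = ‖x‖^2 := by
  rw [EuclideanSpace.norm_eq, Real.sq_sqrt (Finset.sum_nonneg fun i _ => by positivity)]
  simp only [Real.norm_eq_abs, sq_abs]
  refine Finset.sum_congr rfl fun i _ => ?_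
  rw [sq]
  rfl

private lemma mvt_pi_eq_euclid (p : ℕ) (t : ℝ) :
    ∫ z : Fin p → ℝ, (1 + z ⬝ᵥ z) ^ (-t/2)
      = ∫ x : EuclideanSpace ℝ (Fin p), (1 + ‖x‖^2) ^ (-t/2) := by
  have hmp := EuclideanSpace.volume_preserving_symm_measurableEquiv_toLp (Fin p)
  rw [← hmp.integral_comp (MeasurableEquiv.toLp 2 (Fin p → ℝ)).symm.measurableEmbedding
    (fun z : Fin p → ℝ => (1 + z ⬝ᵥ z) ^ (-t/2))]
  refine integral_congr_ae (Filter.Eventually.of_forall (fun x => ?_))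
  simp only [mvt_dot_eq_normsq]

private lemma mvt_integrable_pi (p : ℕ) {t : ℝ} (ht : (p:ℝ) < t) :
    Integrable (fun z : Fin p → ℝ => (1 + z ⬝ᵥ z) ^ (-t/2)) := by
  have hmp := EuclideanSpace.volume_preserving_symm_measurableEquiv_toLp (Fin p)
  have hi : Integrable (fun x : EuclideanSpace ℝ (Fin p) => (1 + ‖x‖^2) ^ (-t/2)) :=
    integrable_rpow_neg_one_add_norm_sq (by rwa [finrank_euclideanSpace_fin])
  refine (hmp.integrable_comp_emb
    (MeasurableEquiv.toLp 2 (Fin p → ℝ)).symm.measurableEmbedding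
    (g := fun z : Fin p → ℝ => (1 + z ⬝ᵥ z) ^ (-t/2))).mp ?_
  refine hi.congr (Filter.Eventually.of_forall (fun x => ?_))
  show (1 + ‖x‖^2) ^ (-t/2) = (1 + _ ⬝ᵥ _) ^ (-t/2)
  rw [mvt_dot_eq_normsq]

private lemma mvt_pi_value (p : ℕ) {t : ℝ} (ht : (p:ℝ) < t) :
    ∫ z : Fin p → ℝ, (1 + z ⬝ᵥ z) ^ (-t/2)
      = π^((p:ℝ)/2) * Real.Gamma ((t-p)/2) / Real.Gamma (t/2) := by
  rcases Nat.eq_zero_or_pos p with h0 | hp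
  · subst h0
    have hG : Real.Gamma (t/2) ≠ 0 :=
      (Real.Gamma_pos_of_pos (by norm_num at ht; linarith)).ne'
    have hdot : ∀ z : Fin 0 → ℝ, z ⬝ᵥ z = 0 := by
      intro z; simp [dotProduct]
    simp only [hdot, add_zero, Real.one_rpow]
    rw [MeasureTheory.integral_const]
    simp [MeasureTheory.volume_pi, Measure.pi_univ, hG, measureReal_def]
  · rw [mvt_pi_eq_euclid, mvt_euclid p hp t ht]

open scoped MatrixOrder in
private lemma mvt_sqrt_exists {p : ℕ} {A : Matrix (Fin p) (Fin p) ℝ} (hA : A.PosDef) :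
    ∃ S : Matrix (Fin p) (Fin p) ℝ, S.det ≠ 0 ∧ |S.det| = Real.sqrt A.det ∧
      ∀ y : Fin p → ℝ, y ⬝ᵥ (A *ᵥ y) = (S *ᵥ y) ⬝ᵥ (S *ᵥ y) := by
  set S := CFC.sqrt A with hSdef
  have hSS : S * S = A := CFC.sqrt_mul_sqrt_self A hA.posSemidef.nonneg
  have hdet : S.det * S.det = A.det := by rw [← det_mul, hSS]
  have hd0 : S.det ≠ 0 := by
    intro h
    rw [h, mul_zero] at hdet
    exact hA.det_pos.ne' hdet.symm
  have habs : |S.det| = Real.sqrt A.det := by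
    rw [← hdet, Real.sqrt_mul_self_eq_abs]
  have hsym : Sᵀ = S := by
    have hH := (CFC.sqrt_nonneg A).posSemidef.isHermitian
    rw [Matrix.IsHermitian, conjTranspose_eq_transpose_of_trivial] at hH
    exact hH
  refine ⟨S, hd0, habs, fun y => ?_⟩
  calc y ⬝ᵥ (A *ᵥ y) = y ⬝ᵥ (S *ᵥ (S *ᵥ y)) := by rw [mulVec_mulVec, hSS]
    _ = (y ᵥ* S) ⬝ᵥ (S *ᵥ y) := dotProduct_mulVec _ _ _
    _ = (S *ᵥ y) ⬝ᵥ (S *ᵥ y) := by rw [← mulVec_transpose, hsym]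

private lemma mvt_quadform (p : ℕ) (A : Matrix (Fin p) (Fin p) ℝ) (hA : A.PosDef)
    {t : ℝ} (ht : (p:ℝ) < t) :
    Integrable (fun y : Fin p → ℝ => (1 + y ⬝ᵥ (A *ᵥ y)) ^ (-t/2)) ∧
    ∫ y : Fin p → ℝ, (1 + y ⬝ᵥ (A *ᵥ y)) ^ (-t/2)
      = (Real.sqrt A.det)⁻¹ * (π^((p:ℝ)/2) * Real.Gamma ((t-p)/2) / Real.Gamma (t/2)) := by
  obtain ⟨S, hd0, habs, hquad⟩ := mvt_sqrt_exists hA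
  have hmap := Real.map_matrix_volume_pi_eq_smul_volume_pi (M := S) hd0
  have hcont := mvt_contF (p := p) t
  have hmeas : AEMeasurable (⇑(Matrix.toLin' S)) (volume : Measure (Fin p → ℝ)) :=
    (LinearMap.continuous_of_finiteDimensional _).measurable.aemeasurable
  have hsm : AEStronglyMeasurable (fun z : Fin p → ℝ => (1 + z ⬝ᵥ z) ^ (-t/2))
      (Measure.map (⇑(Matrix.toLin' S)) volume) := by
    exact hcont.aestronglyMeasurable
  have hcomp : ∀ y : Fin p → ℝ, (1 + y ⬝ᵥ (A *ᵥ y)) ^ (-t/2)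
      = (fun z : Fin p → ℝ => (1 + z ⬝ᵥ z) ^ (-t/2)) ((Matrix.toLin' S) y) := by
    intro y
    simp only [Matrix.toLin'_apply, hquad]
  constructor
  · have hint : Integrable (fun z : Fin p → ℝ => (1 + z ⬝ᵥ z) ^ (-t/2))
        (Measure.map (⇑(Matrix.toLin' S)) volume) := by
      rw [hmap]
      exact (mvt_integrable_pi p ht).smul_measure ENNReal.ofReal_ne_top
    have := (integrable_map_measure hsm hmeas).mp hint
    refine this.congr (Filter.Eventually.of_forall (fun y => ?_))
    exact (hcomp y).symm
  · calc ∫ y : Fin p → ℝ, (1 + y ⬝ᵥ (A *ᵥ y)) ^ (-t/2)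
        = ∫ y : Fin p → ℝ, (fun z : Fin p → ℝ => (1 + z ⬝ᵥ z) ^ (-t/2))
            ((Matrix.toLin' S) y) := by
          exact integral_congr_ae (Filter.Eventually.of_forall (fun y => hcomp y))
      _ = ∫ z : Fin p → ℝ, (1 + z ⬝ᵥ z) ^ (-t/2)
            ∂(Measure.map (⇑(Matrix.toLin' S)) volume) := (integral_map hmeas hsm).symm
      _ = |S.det⁻¹| * ∫ z : Fin p → ℝ, (1 + z ⬝ᵥ z) ^ (-t/2) := by
          rw [hmap, integral_smul_measure, ENNReal.toReal_ofReal (abs_nonneg _),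
            smul_eq_mul]
      _ = (Real.sqrt A.det)⁻¹ *
            (π^((p:ℝ)/2) * Real.Gamma ((t-p)/2) / Real.Gamma (t/2)) := by
          rw [mvt_pi_value p ht, abs_inv, habs]

end MvtAux

theorem mvt_power_integral_upper_bound (p : ℕ) (ν β : ℝ) (hν : 0 < ν) (hβ : 0 ≤ β)
    (μ : Fin p → ℝ) (V : Matrix (Fin p) (Fin p) ℝ) (hV : V.PosDef) :
    (1 / (1 + β)) * ∫ z : Fin p → ℝ, mvtDensity p ν μ V z ^ (1 + β) ≤
      (Real.Gamma ((ν + p) / 2) / Real.Gamma (ν / 2)) ^ β *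
        ((1 / (1 + β)) * (π * ν) ^ (-(β * p) / 2) * V.det ^ (-β / 2)) := by
  have hp0 : (0:ℝ) ≤ p := Nat.cast_nonneg p
  have hνp : (0:ℝ) < ν + p := by linarith
  have ht : (p:ℝ) < ν + p := by linarith
  set Γ₁ := Real.Gamma ((ν + p) / 2) with hΓ₁def
  set Γ₀ := Real.Gamma (ν / 2) with hΓ₀def
  have hΓ₁ : 0 < Γ₁ := Real.Gamma_pos_of_pos (by linarith)
  have hΓ₀ : 0 < Γ₀ := Real.Gamma_pos_of_pos (by linarith)
  have hdet : 0 < V.det := hV.det_pos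
  have hν2 : (0:ℝ) < ν ^ ((p:ℝ)/2) := Real.rpow_pos_of_pos hν _
  have hπ2 : (0:ℝ) < π ^ ((p:ℝ)/2) := Real.rpow_pos_of_pos pi_pos _
  have hd2 : (0:ℝ) < V.det ^ ((1:ℝ)/2) := Real.rpow_pos_of_pos hdet _
  set C := Γ₁ / (Γ₀ * ν ^ ((p:ℝ)/2) * π ^ ((p:ℝ)/2) * V.det ^ ((1:ℝ)/2)) with hCdef
  have hC : 0 < C := div_pos hΓ₁ (by positivity)
  have hW : (V⁻¹).PosDef := hV.inv
  set A := ν⁻¹ • V⁻¹ with hAdef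
  have hA : A.PosDef := by
    refine Matrix.PosDef.of_dotProduct_mulVec_pos ?_ ?_
    · have h1 := hW.isHermitian
      unfold Matrix.IsHermitian at *
      rw [hAdef, conjTranspose_smul, h1]
      congr 1
    · intro x hx
      have h2 := hW.dotProduct_mulVec_pos hx
      rw [hAdef, smul_mulVec, dotProduct_smul]
      exact smul_pos (by positivity) h2
  set f := mvtDensity p ν μ V with hfdef
  have hrw : ∀ z, f z = C * (1 + (z - μ) ⬝ᵥ (A *ᵥ (z - μ))) ^ (-(ν + p)/2) := by
    intro z
    have hone : (1:ℝ)/ν = ν⁻¹ := one_div ν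
    simp only [hfdef, mvtDensity, hAdef, hCdef, hΓ₁def, hΓ₀def, smul_mulVec,
      dotProduct_smul, smul_eq_mul, hone]
  have hbase : ∀ w : Fin p → ℝ, (1:ℝ) ≤ 1 + w ⬝ᵥ (A *ᵥ w) := by
    intro w
    have := hA.posSemidef.dotProduct_mulVec_nonneg w
    rw [star_trivial] at this
    linarith
  obtain ⟨hint, hval⟩ := mvt_quadform p A hA ht
  -- determinant computation
  have hAdet : A.det = (ν ^ p * V.det)⁻¹ := by
    rw [hAdef, det_smul, det_nonsing_inv, Ring.inverse_eq_inv', Fintype.card_fin,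
      mul_inv, inv_pow]
  have hsqrtdet : (Real.sqrt A.det)⁻¹ = ν ^ ((p:ℝ)/2) * V.det ^ ((1:ℝ)/2) := by
    rw [hAdet, Real.sqrt_inv, inv_inv, Real.sqrt_mul (by positivity), Real.sqrt_eq_rpow,
      Real.sqrt_eq_rpow, ← Real.rpow_natCast ν p, ← Real.rpow_mul hν.le]
    congr 2
    ring
  -- integral of the density equals 1
  have hfint : Integrable f := by
    have := (hint.comp_sub_right μ).const_mul C
    refine this.congr (Filter.Eventually.of_forall (fun z => ?_))
    exact (hrw z).symm
  have hfone : ∫ z : Fin p → ℝ, f z = 1 := by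
    have h1 : ∫ z : Fin p → ℝ, f z
        = C * ∫ z : Fin p → ℝ, (1 + (z - μ) ⬝ᵥ (A *ᵥ (z - μ))) ^ (-(ν + p)/2) := by
      rw [← MeasureTheory.integral_const_mul]
      exact integral_congr_ae (Filter.Eventually.of_forall (fun z => hrw z))
    rw [h1, integral_sub_right_eq_self
      (fun w : Fin p → ℝ => (1 + w ⬝ᵥ (A *ᵥ w)) ^ (-(ν + p)/2)) μ, hval, hsqrtdet]
    have he : (ν + (p:ℝ) - (p:ℝ))/2 = ν/2 := by ring
    rw [he, ← hΓ₀def, ← hΓ₁def, hCdef]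
    field_simp
  -- pointwise bound
  have hpt : ∀ z, f z ^ (1 + β) ≤ C ^ β * f z := by
    intro z
    have hb1 := hbase (z - μ)
    have hbpos : (0:ℝ) < 1 + (z - μ) ⬝ᵥ (A *ᵥ (z - μ)) := by linarith
    have hfzpos : 0 < f z := by
      rw [hrw z]
      exact mul_pos hC (Real.rpow_pos_of_pos hbpos _)
    have hfzle : f z ≤ C := by
      rw [hrw z]
      exact mul_le_of_le_one_right hC.le
        (Real.rpow_le_one_of_one_le_of_nonpos hb1 (by linarith))
    calc f z ^ (1 + β) = f z ^ β * f z := by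
          rw [Real.rpow_add hfzpos, Real.rpow_one]; ring
      _ ≤ C ^ β * f z := mul_le_mul_of_nonneg_right
          (Real.rpow_le_rpow hfzpos.le hfzle hβ) hfzpos.le
  have hmain : ∫ z : Fin p → ℝ, f z ^ (1 + β) ≤ C ^ β := by
    calc ∫ z : Fin p → ℝ, f z ^ (1 + β) ≤ ∫ z : Fin p → ℝ, C ^ β * f z := by
          refine integral_mono_of_nonneg (Filter.Eventually.of_forall (fun z => ?_))
            (hfint.const_mul _) (Filter.Eventually.of_forall (fun z => hpt z))
          have hb1 := hbase (z - μ)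
          have hbpos : (0:ℝ) < 1 + (z - μ) ⬝ᵥ (A *ᵥ (z - μ)) := by linarith
          have hfzpos : 0 < f z := by
            rw [hrw z]
            exact mul_pos hC (Real.rpow_pos_of_pos hbpos _)
          exact Real.rpow_nonneg hfzpos.le _
      _ = C ^ β := by rw [MeasureTheory.integral_const_mul, hfone, mul_one]
  -- rewrite the right-hand side
  have hCpow : C ^ β = (Γ₁ / Γ₀) ^ β * ((π * ν) ^ (-(β * p) / 2) * V.det ^ (-β / 2)) := by
    have hC2 : C = (Γ₁ / Γ₀) * (ν ^ (-((p:ℝ)/2)) * π ^ (-((p:ℝ)/2)) * V.det ^ (-((1:ℝ)/2))) := by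
      rw [hCdef, Real.rpow_neg hν.le, Real.rpow_neg pi_pos.le, Real.rpow_neg hdet.le]
      field_simp
      try ring
      try exact Or.inl trivial
    rw [hC2, Real.mul_rpow (by positivity) (by positivity),
      Real.mul_rpow (by positivity) (by positivity),
      Real.mul_rpow (by positivity) (by positivity),
      ← Real.rpow_mul hν.le, ← Real.rpow_mul pi_pos.le, ← Real.rpow_mul hdet.le,
      Real.mul_rpow pi_pos.le hν.le]
    rw [show -((p:ℝ)/2) * β = -(β * p)/2 by ring, show -((1:ℝ)/2) * β = -β/2 by ring]
    ring
  have h1β : (0:ℝ) < 1 + β := by linarith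
  calc (1 / (1 + β)) * ∫ z : Fin p → ℝ, f z ^ (1 + β)
      ≤ (1 / (1 + β)) * C ^ β := by
        exact mul_le_mul_of_nonneg_left hmain (by positivity)
    _ = (Γ₁ / Γ₀) ^ β * ((1 / (1 + β)) * (π * ν) ^ (-(β * p) / 2) * V.det ^ (-β / 2)) := by
        rw [hCpow]; ring
end

section
/- Fix β > 0 and an integer p > 1. Define w(ν) = (1 + p/ν)^{β(ν+p-1)/2} for ν > 0. Then w is strictly decreasing in ν. For p = 1, w is strictly increasing in ν. -/
open Real Set

private lemma log_lt_half (x : ℝ) (hx : 1 < x) : Real.log x < (x - 1/x)/2 := by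
  have hx0 : 0 < x := by linarith
  have hu : 0 < Real.log x := Real.log_pos hx
  have h := Real.self_lt_sinh_iff.mpr hu
  rw [Real.sinh_eq, Real.exp_log hx0, Real.exp_neg, Real.exp_log hx0] at h
  rw [one_div]
  linarith

private lemma lt_log (x : ℝ) (hx : 1 < x) : 1 - 1/x < Real.log x := by
  have hx0 : 0 < x := by linarith
  have h := Real.log_lt_sub_one_of_pos (x := x⁻¹) (by positivity)
    (by rw [ne_eq, inv_eq_one]; linarith)
  rw [Real.log_inv] at h
  rw [one_div]
  linarith

private lemma hasDerivAt_g (P : ℝ) (hP : 0 < P) {x : ℝ} (hx : 0 < x) :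
    HasDerivAt (fun ν : ℝ => (ν + P - 1) * (Real.log (ν + P) - Real.log ν))
      ((Real.log (x + P) - Real.log x) + (x + P - 1) * (1/(x+P) - 1/x)) x := by
  have hxP : 0 < x + P := by linarith
  have h1 : HasDerivAt (fun ν : ℝ => ν + P - 1) 1 x := by
    simpa using ((hasDerivAt_id x).add_const P).sub_const 1
  have h2 : HasDerivAt (fun ν : ℝ => Real.log (ν + P)) (1/(x+P)) x := by
    simpa using ((hasDerivAt_id x).add_const P).log hxP.ne'
  have h3 : HasDerivAt Real.log (1/x) x := by
    simpa [one_div] using Real.hasDerivAt_log hx.ne'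
  have := h1.mul (h2.sub h3)
  exact this.congr_deriv (by simp only [Pi.sub_apply]; ring)

theorem w_monotonicity (β : ℝ) (hβ : 0 < β) (p : ℕ) :
    (1 < p → StrictAntiOn (fun ν : ℝ => (1 + (p : ℝ) / ν) ^ (β * (ν + p - 1) / 2)) (Set.Ioi 0)) ∧
    (p = 1 → StrictMonoOn (fun ν : ℝ => (1 + (p : ℝ) / ν) ^ (β * (ν + p - 1) / 2)) (Set.Ioi 0)) := by
  set P : ℝ := (p : ℝ) with hPdef
  -- rewrite w as exp of (β/2) * g
  have key : ∀ (hP : 1 ≤ P) (ν : ℝ), ν ∈ Set.Ioi (0:ℝ) →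
      (1 + P / ν) ^ (β * (ν + P - 1) / 2)
        = Real.exp ((β/2) * ((ν + P - 1) * (Real.log (ν + P) - Real.log ν))) := by
    intro hP ν hν
    have hν0 : (0:ℝ) < ν := hν
    have hνP : 0 < ν + P := by linarith
    have hbase : (1:ℝ) + P / ν = (ν + P) / ν := by field_simp
    rw [hbase, Real.rpow_def_of_pos (by positivity), Real.log_div hνP.ne' hν0.ne']
    ring_nf
  constructor
  · intro hp
    have hp2 : 2 ≤ p := hp
    have hP2 : (2:ℝ) ≤ P := by rw [hPdef]; exact_mod_cast hp2
    have hP1 : (1:ℝ) ≤ P := by linarith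
    have hganti : StrictAntiOn (fun ν : ℝ => (ν + P - 1) * (Real.log (ν + P) - Real.log ν))
        (Set.Ioi 0) := by
      apply strictAntiOn_of_deriv_neg (convex_Ioi 0)
      · intro x hx
        exact (hasDerivAt_g P (by linarith) hx).continuousAt.continuousWithinAt
      · intro x hx
        rw [interior_Ioi] at hx
        have hx0 : (0:ℝ) < x := hx
        have hxP : 0 < x + P := by linarith
        rw [(hasDerivAt_g P (by linarith) hx0).deriv]
        have h1 : 1 < (x+P)/x := (one_lt_div hx0).mpr (by linarith)
        have h2 := log_lt_half _ h1
        rw [one_div_div] at h2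
        have hlog : Real.log (x+P) - Real.log x = Real.log ((x+P)/x) :=
          (Real.log_div hxP.ne' hx0.ne').symm
        have halg : ((x+P)/x - x/(x+P))/2 + (x + P - 1) * (1/(x+P) - 1/x)
            = P*(2-P)/(2*x*(x+P)) := by field_simp; ring
        have hnp : P*(2-P)/(2*x*(x+P)) ≤ 0 :=
          div_nonpos_of_nonpos_of_nonneg (by nlinarith) (by positivity)
        rw [hlog]
        nlinarith [h2, halg, hnp]
    intro a ha b hb hab
    simp only
    rw [key hP1 a ha, key hP1 b hb, Real.exp_lt_exp]
    exact mul_lt_mul_of_pos_left (hganti ha hb hab) (by positivity)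
  · intro hp
    have hP1 : P = 1 := by rw [hPdef, hp]; norm_num
    have hgmono : StrictMonoOn (fun ν : ℝ => (ν + P - 1) * (Real.log (ν + P) - Real.log ν))
        (Set.Ioi 0) := by
      apply strictMonoOn_of_deriv_pos (convex_Ioi 0)
      · intro x hx
        exact (hasDerivAt_g P (by rw [hP1]; norm_num) hx).continuousAt.continuousWithinAt
      · intro x hx
        rw [interior_Ioi] at hx
        have hx0 : (0:ℝ) < x := hx
        rw [(hasDerivAt_g P (by rw [hP1]; norm_num) hx0).deriv, hP1]
        have h1 : 1 < (x+1)/x := (one_lt_div hx0).mpr (by linarith)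
        have h2 := lt_log _ h1
        rw [one_div_div] at h2
        have hlog : Real.log (x+1) - Real.log x = Real.log ((x+1)/x) :=
          (Real.log_div (by linarith) hx0.ne').symm
        have halg : (x + 1 - 1) * (1/(x+1) - 1/x) = x/(x+1) - 1 := by field_simp; ring
        rw [hlog]
        nlinarith [h2, halg]
    intro a ha b hb hab
    simp only
    rw [key (le_of_eq hP1.symm) a ha, key (le_of_eq hP1.symm) b hb, Real.exp_lt_exp]
    exact mul_lt_mul_of_pos_left (hgmono ha hb hab) (by positivity)
end
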